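/- For all integers m ≥ 1 and x ≥ 1 and every codeword c ∈ C(m,x), the bitwise complement c̄ of c (obtained by flipping every bit of c) is also a codeword of C(m,x), and its index satisfies g(c̄) = N(m,x) − 1 − g(c); in particular, for a codeword c⁰ starting with 0 from the left, the codeword indexed by N(m,x) − 1 − g(c⁰) is exactly the complement of c⁰. -/
import Mathlib


/-- `noForbidden m x c` says the binary word `c = (c_{m-1}, …, c_0)` contains no contiguous
subword of the form `0 1^y 0` or `1 0^y 1` for any `1 ≤ y ≤ x`. -/
def noForbidden (m x : ℕ) (c : Fin m → Bool) : Prop :=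
  ∀ j y : ℕ, 1 ≤ y → y ≤ x → (h : j + y + 1 < m) →
    ¬ ((∀ k, 1 ≤ k → (hk : k ≤ y) → c ⟨j + k, by omega⟩ = ! c ⟨j, by omega⟩) ∧
        c ⟨j + y + 1, h⟩ = c ⟨j, by omega⟩)

/-- `N(m, x)`: the cardinality of the LOCO code `C(m, x)`. -/
noncomputable def locoN (m x : ℕ) : ℕ := Nat.card {c : Fin m → Bool // noForbidden m x c}

/-- `N(k, x)` extended to integer `k` by the convention `N(k, x) = 2` for `k ≤ 1`. -/
noncomputable def Nex (k : ℤ) (x : ℕ) : ℤ := if k ≤ 1 then 2 else (locoN k.toNat x : ℤ)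

/-- Strict lexicographic order on binary words, comparing bits from `c_{m-1}`
(most significant) down to `c_0`, with `0 < 1`. -/
def lexLt (m : ℕ) (d c : Fin m → Bool) : Prop :=
  ∃ i : Fin m, d i = false ∧ c i = true ∧ ∀ j : Fin m, (i : ℕ) < (j : ℕ) → d j = c j

/-- The index `g(m, x, c)` of a codeword: the number of codewords of `C(m, x)` that
precede `c` in lexicographic order. -/
noncomputable def locoIdx (m x : ℕ) (c : Fin m → Bool) : ℕ :=
  Nat.card {d : Fin m → Bool // noForbidden m x d ∧ lexLt m d c}

lemma noForbidden_compl {m x : ℕ} {c : Fin m → Bool} (hc : noForbidden m x c) :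
    noForbidden m x (fun i => ! c i) := by
  intro j y hy1 hy2 h hcon
  apply hc j y hy1 hy2 h
  obtain ⟨h1, h2⟩ := hcon
  refine ⟨fun k hk1 hk2 => ?_, ?_⟩
  · have := h1 k hk1 hk2
    simp only [Bool.not_not] at this
    rw [← this, Bool.not_not]
  · exact Bool.not_inj h2

lemma lexLt_compl {m : ℕ} (c e : Fin m → Bool) :
    lexLt m (fun i => ! e i) (fun i => ! c i) ↔ lexLt m c e := by
  constructor
  · rintro ⟨i, h1, h2, h3⟩
    refine ⟨i, by simpa using h2, by simpa using h1, fun j hj => ?_⟩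
    have := h3 j hj
    simp only at this
    exact (Bool.not_inj this).symm
  · rintro ⟨i, h1, h2, h3⟩
    exact ⟨i, by simp [h2], by simp [h1], fun j hj => by simp [h3 j hj]⟩

lemma lexLt_irrefl {m : ℕ} (c : Fin m → Bool) : ¬ lexLt m c c := by
  rintro ⟨i, h1, h2, -⟩
  simp [h1] at h2

lemma lexLt_asymm {m : ℕ} {d c : Fin m → Bool} (h : lexLt m d c) : ¬ lexLt m c d := by
  obtain ⟨i, h1, h2, h3⟩ := h
  rintro ⟨i', g1, g2, g3⟩
  rcases lt_trichotomy (i : ℕ) (i' : ℕ) with hlt | heq | hgt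
  · have := h3 i' hlt
    rw [g2, g1] at this
    exact absurd this (by simp)
  · have : i = i' := Fin.ext heq
    subst this
    rw [h1] at g2
    exact absurd g2 (by simp)
  · have := g3 i hgt
    rw [h1, h2] at this
    exact absurd this (by simp)

lemma lexLt_trichotomy {m : ℕ} (d c : Fin m → Bool) :
    lexLt m d c ∨ d = c ∨ lexLt m c d := by
  classical
  by_cases hdc : d = c
  · exact Or.inr (Or.inl hdc)
  have hS : (Finset.univ.filter (fun i : Fin m => d i ≠ c i)).Nonempty := by
    by_contra hne
    apply hdc
    funext i
    by_contra hne2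
    exact hne ⟨i, by simp [hne2]⟩
  set S := Finset.univ.filter (fun i : Fin m => d i ≠ c i) with hSdef
  set i := S.max' hS with hi
  have hiS : i ∈ S := S.max'_mem hS
  have hne : d i ≠ c i := by simpa [hSdef] using hiS
  have hagree : ∀ j : Fin m, (i : ℕ) < (j : ℕ) → d j = c j := by
    intro j hj
    by_contra hne2
    have : j ∈ S := by simp [hSdef, hne2]
    have := S.le_max' j this
    have : (j : ℕ) ≤ (i : ℕ) := this
    omega
  cases hd : d i with
  | false =>
    have hcne : c i = true := by
      cases hcc : c i with
      | false => rw [hd, hcc] at hne; exact absurd rfl hne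
      | true => rfl
    exact Or.inl ⟨i, hd, hcne, hagree⟩
  | true =>
    have hcne : c i = false := by
      cases hcc : c i with
      | false => rfl
      | true => rw [hd, hcc] at hne; exact absurd rfl hne
    exact Or.inr (Or.inr ⟨i, hcne, hd, fun j hj => (hagree j hj).symm⟩)

/-- For all `m ≥ 1`, `x ≥ 1` and every codeword `c ∈ C(m, x)`, the bitwise
complement of `c` is also a codeword of `C(m, x)` and its index satisfies
`g(c̄) = N(m, x) - 1 - g(c)`. -/
theorem loco_complement_index (m x : ℕ) (hm : 1 ≤ m) (hx : 1 ≤ x)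
    (c : Fin m → Bool) (hc : noForbidden m x c) :
    noForbidden m x (fun i => ! c i) ∧
    (locoIdx m x (fun i => ! c i) : ℤ) = (locoN m x : ℤ) - 1 - (locoIdx m x c : ℤ) := by
  classical
  refine ⟨noForbidden_compl hc, ?_⟩
  -- bijection: predecessors of c̄ correspond to successors of c
  have hcompl2 : ∀ d : Fin m → Bool, (fun i => ! (! d i)) = d := by
    intro d; funext i; simp
  have hbij : locoIdx m x (fun i => ! c i)
      = Nat.card {e : Fin m → Bool // noForbidden m x e ∧ lexLt m c e} := by
    unfold locoIdx
    apply Nat.card_congr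
    refine ⟨fun d => ⟨fun i => ! d.1 i, noForbidden_compl d.2.1, ?_⟩,
            fun e => ⟨fun i => ! e.1 i, noForbidden_compl e.2.1, ?_⟩, ?_, ?_⟩
    · exact (lexLt_compl c (fun i => ! d.1 i)).mp
        (by rw [show (fun i => ! ! d.1 i) = d.1 from hcompl2 d.1]; exact d.2.2)
    · exact (lexLt_compl c e.1).mpr e.2.2
    · rintro ⟨d, hd⟩; simp
    · rintro ⟨e, he⟩; simp
  rw [hbij]
  -- counting: N = (# < c) + 1 + (# > c)
  have hcount : locoN m x = locoIdx m x c + 1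
      + Nat.card {e : Fin m → Bool // noForbidden m x e ∧ lexLt m c e} := by
    unfold locoN locoIdx
    rw [Nat.card_eq_fintype_card, Nat.card_eq_fintype_card, Nat.card_eq_fintype_card]
    rw [Fintype.card_subtype, Fintype.card_subtype, Fintype.card_subtype]
    have hsplit : (Finset.univ.filter (fun d : Fin m → Bool => noForbidden m x d))
        = (Finset.univ.filter (fun d => noForbidden m x d ∧ lexLt m d c))
          ∪ ((Finset.univ.filter (fun d => noForbidden m x d ∧ d = c))
          ∪ (Finset.univ.filter (fun d => noForbidden m x d ∧ lexLt m c d))) := by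
      ext d
      simp only [Finset.mem_filter, Finset.mem_union, Finset.mem_univ, true_and]
      constructor
      · intro hd
        rcases lexLt_trichotomy d c with h | h | h
        · exact Or.inl ⟨hd, h⟩
        · exact Or.inr (Or.inl ⟨hd, h⟩)
        · exact Or.inr (Or.inr ⟨hd, h⟩)
      · rintro (⟨hd, -⟩ | ⟨hd, -⟩ | ⟨hd, -⟩) <;> exact hd
    have hdisj1 : Disjoint
        (Finset.univ.filter (fun d : Fin m → Bool => noForbidden m x d ∧ d = c))
        (Finset.univ.filter (fun d => noForbidden m x d ∧ lexLt m c d)) := by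
      rw [Finset.disjoint_left]
      intro d hd hmem
      simp only [Finset.mem_filter, Finset.mem_univ, true_and] at hd hmem
      obtain ⟨-, rfl⟩ := hd
      exact lexLt_irrefl d hmem.2
    have hdisj2 : Disjoint
        (Finset.univ.filter (fun d : Fin m → Bool => noForbidden m x d ∧ lexLt m d c))
        ((Finset.univ.filter (fun d => noForbidden m x d ∧ d = c))
          ∪ (Finset.univ.filter (fun d => noForbidden m x d ∧ lexLt m c d))) := by
      rw [Finset.disjoint_left]
      intro d hd hmem
      simp only [Finset.mem_filter, Finset.mem_union, Finset.mem_univ, true_and] at hd hmem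
      obtain ⟨-, hlt⟩ := hd
      rcases hmem with ⟨-, rfl⟩ | ⟨-, h⟩
      · exact lexLt_irrefl d hlt
      · exact lexLt_asymm hlt h
    rw [hsplit]
    rw [Finset.card_union_of_disjoint hdisj2, Finset.card_union_of_disjoint hdisj1]
    · have hone : (Finset.univ.filter (fun d : Fin m → Bool => noForbidden m x d ∧ d = c)).card = 1 := by
        rw [Finset.card_eq_one]
        refine ⟨c, ?_⟩
        ext d
        simp only [Finset.mem_filter, Finset.mem_univ, true_and, Finset.mem_singleton]
        constructor
        · rintro ⟨-, h⟩; exact h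
        · rintro rfl; exact ⟨hc, rfl⟩
      rw [hone]
      ring
  rw [hcount]
  push_cast
  ring
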